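/- Let φ : X → Y be a finite dominant morphism of affine varieties over an algebraically closed field k with Y normal. Let W ⊆ Y be an irreducible closed subvariety and Z any irreducible component of φ⁻¹(W). Then φ(Z) = W and dim Z = dim W. -/

import Mathlib

open Polynomial

section Aux

variable {B A : Type*}

/-- Determinant trick: if `y ∈ p·A` with `A` integral over `B`, then `y` satisfies a monic
polynomial over `B` all of whose non-leading coefficients lie in `p`. -/
lemma exists_monic_aeval_eq_zero_coeff_mem [CommRing B] [CommRing A]
    [Algebra B A] [Algebra.IsIntegral B A] (p : Ideal B) (y : A)
    (hy : y ∈ p.map (algebraMap B A)) :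
    ∃ f : B[X], f.Monic ∧ (∀ k < f.natDegree, f.coeff k ∈ p) ∧ aeval y f = 0 := by
  classical
  -- write `y` as a finite combination `∑ cᵢ • φ(pᵢ)`
  have hy' : y ∈ Submodule.span A ((algebraMap B A) '' (p : Set B)) := by
    rwa [Ideal.map, Ideal.span, Ideal.submodule_span_eq] at hy
  rw [Submodule.mem_span_set] at hy'
  obtain ⟨cf, hsupp, hsum⟩ := hy'
  -- for each basis element pick a preimage in `p`
  have hchoice : ∀ z ∈ cf.support, ∃ b ∈ p, algebraMap B A b = z := by
    intro z hz
    obtain ⟨b, hb, hbz⟩ := hsupp hz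
    exact ⟨b, hb, hbz⟩
  choose qf hqf hqfv using hchoice
  -- the finite subalgebra containing the coefficients
  set M : Subalgebra B A := Algebra.adjoin B (↑(cf.support.image cf) : Set A) with hM
  have hMfg : M.toSubmodule.FG :=
    fg_adjoin_of_finite (cf.support.image cf).finite_toSet
      fun x _ => Algebra.IsIntegral.isIntegral x
  haveI : Module.Finite B M := ⟨(Submodule.fg_top _).mpr (by exact hMfg)⟩
  have hcM : ∀ z ∈ cf.support, cf z ∈ M := fun z hz =>
    Algebra.subset_adjoin (Finset.mem_coe.mpr (Finset.mem_image_of_mem cf hz))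
  have hsum' : y = ∑ z ∈ cf.support, cf z * z := by
    rw [← hsum, Finsupp.sum]
    exact Finset.sum_congr rfl fun z _ => (smul_eq_mul (cf z) z).symm ▸ rfl
  have hyM : y ∈ M := by
    rw [hsum']
    refine Subalgebra.sum_mem _ fun z hz => ?_
    have hzM : z ∈ M := by
      rw [← hqfv z hz]
      exact M.algebraMap_mem (qf z hz)
    exact M.mul_mem (hcM z hz) hzM
  set ym : M := ⟨y, hyM⟩ with hym
  -- multiplication by `y` is an endomorphism of `M` with range in `p • M`
  set g : Module.End B M := Algebra.lmul B M ym with hg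
  have hrange : LinearMap.range g ≤ p • (⊤ : Submodule B M) := by
    rintro _ ⟨m, rfl⟩
    have hgm : g m = ∑ z ∈ cf.support.attach,
        qf z z.2 • (⟨cf z * (m : A), M.mul_mem (hcM z z.2) m.2⟩ : M) := by
      apply Subtype.ext
      push_cast
      show y * (m : A) = _
      rw [hsum', Finset.sum_mul, ← Finset.sum_attach cf.support (fun z => cf z * z * (m : A))]
      refine Finset.sum_congr rfl fun z _ => ?_
      rw [Algebra.smul_def, hqfv ↑z z.2]
      ring
    rw [hgm]
    exact Submodule.sum_mem _ fun z _ =>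
      Submodule.smul_mem_smul (hqf z z.2) Submodule.mem_top
  obtain ⟨f, hmonic, -, hcoeff, haeval⟩ :=
    LinearMap.exists_monic_and_coeff_mem_pow_and_aeval_eq_zero_of_range_le_smul B g p hrange
  refine ⟨f, hmonic, fun k hk => ?_, ?_⟩
  · exact Ideal.pow_le_self (Nat.sub_ne_zero_of_lt hk) (hcoeff k)
  · -- evaluate the endomorphism identity at `1`
    have h1 : aeval ym f = 0 := by
      have h2 : Algebra.lmul B M (aeval ym f) = 0 := by
        rw [← Polynomial.aeval_algHom_apply (Algebra.lmul B M) ym f, haeval]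
      have h3 : (Algebra.lmul B M) (aeval ym f) 1 = 0 := by rw [h2]; rfl
      have h4 : aeval ym f * 1 = 0 := h3
      rwa [mul_one] at h4
    have h4 := Polynomial.aeval_algHom_apply M.val ym f
    rw [h1, map_zero] at h4
    exact h4

/-- If an integral element `y` over an integrally closed domain `B` satisfies a monic
polynomial with non-leading coefficients in a prime ideal `p`, then the non-leading
coefficients of its minimal polynomial also lie in `p`. -/
lemma minpoly_coeff_mem [CommRing B] [IsDomain B] [IsIntegrallyClosed B]
    [CommRing A] [IsDomain A] [Algebra B A] [NoZeroSMulDivisors B A]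
    (p : Ideal B) [hp : p.IsPrime] {y : A} (hy : IsIntegral B y)
    {f : B[X]} (hf : f.Monic) (hfc : ∀ k < f.natDegree, f.coeff k ∈ p)
    (hfy : aeval y f = 0) :
    ∀ k < (minpoly B y).natDegree, (minpoly B y).coeff k ∈ p := by
  obtain ⟨g, hg⟩ := minpoly.isIntegrallyClosed_dvd hy hfy
  set π : B →+* B ⧸ p := Ideal.Quotient.mk p
  set n := f.natDegree
  have hfmap : f.map π = X ^ n := by
    ext k
    rw [coeff_map, coeff_X_pow]
    rcases lt_trichotomy k n with h | h | h
    · rw [if_neg h.ne, Ideal.Quotient.eq_zero_iff_mem]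
      exact hfc k h
    · subst h; rw [if_pos rfl, hf.coeff_natDegree, map_one]
    · rw [if_neg h.ne', coeff_eq_zero_of_natDegree_lt h, map_zero]
  have hmul : (minpoly B y).map π * g.map π = X ^ n := by
    rw [← Polynomial.map_mul, ← hg, hfmap]
  have hMmonic : ((minpoly B y).map π).Monic := (minpoly.monic hy).map π
  have hMne : (minpoly B y).map π ≠ 0 := hMmonic.ne_zero
  have hgne : g.map π ≠ 0 := by
    intro h
    apply pow_ne_zero n (X_ne_zero (R := B ⧸ p))
    rw [← hmul, h, mul_zero]
  have htrail : ((minpoly B y).map π).natTrailingDegree + (g.map π).natTrailingDegree = n := by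
    rw [← natTrailingDegree_mul hMne hgne, hmul, natTrailingDegree_X_pow]
  have hdeg : ((minpoly B y).map π).natDegree + (g.map π).natDegree = n := by
    rw [← natDegree_mul hMne hgne, hmul, natDegree_X_pow]
  have h1 := natTrailingDegree_le_natDegree ((minpoly B y).map π)
  have h2 := natTrailingDegree_le_natDegree (g.map π)
  have heq : ((minpoly B y).map π).natTrailingDegree = ((minpoly B y).map π).natDegree := by
    omega
  have hdeg' : ((minpoly B y).map π).natDegree = (minpoly B y).natDegree :=
    (minpoly.monic hy).natDegree_map π
  intro k hk
  have : ((minpoly B y).map π).coeff k = 0 := by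
    apply coeff_eq_zero_of_lt_natTrailingDegree
    omega
  rw [coeff_map] at this
  exact Ideal.Quotient.eq_zero_iff_mem.mp this

end Aux

section Core

variable {B A : Type*} [CommRing B] [IsDomain B] [IsIntegrallyClosed B]
  [CommRing A] [IsDomain A] [Algebra B A] [Algebra.IsIntegral B A]

/-- Key step in going-down: if `φ(b) * s ∈ p·A` with `b ∉ p`, then some positive
power of `s` lies in `p·A`. -/
lemma pow_mem_map_of_mul_mem (hinj : Function.Injective (algebraMap B A))
    (p : Ideal B) [hp : p.IsPrime] {b : B} (hb : b ∉ p) {s : A}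
    (hmem : algebraMap B A b * s ∈ p.map (algebraMap B A)) :
    ∃ m : ℕ, 0 < m ∧ s ^ m ∈ p.map (algebraMap B A) := by
  haveI : Module.IsTorsionFree B A := (Module.isTorsionFree_iff_algebraMap_injective).mpr hinj
  haveI : NoZeroSMulDivisors B A := ⟨fun {c x} h => by
    rw [Algebra.smul_def, mul_eq_zero] at h
    exact h.imp_left fun h => hinj (h.trans (map_zero _).symm)⟩
  have hb0 : b ≠ 0 := fun h => hb (h ▸ p.zero_mem)
  set y : A := algebraMap B A b * s with hy
  have hy_int : IsIntegral B y := Algebra.IsIntegral.isIntegral y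
  have hs_int : IsIntegral B s := Algebra.IsIntegral.isIntegral s
  set F := minpoly B y with hF
  set g := minpoly B s with hgdef
  set n := F.natDegree
  set m := g.natDegree
  have hmpos : 0 < m := minpoly.natDegree_pos hs_int
  -- non-leading coefficients of `F` lie in `p`
  obtain ⟨f, hfmonic, hfc, hfy⟩ := exists_monic_aeval_eq_zero_coeff_mem p y hmem
  have hFc : ∀ k < n, F.coeff k ∈ p := minpoly_coeff_mem p hy_int hfmonic hfc hfy
  -- `F ∣ g.scaleRoots b`
  have hscale_aeval : aeval y (g.scaleRoots b) = 0 := by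
    have := scaleRoots_aeval_eq_zero (p := g) (a := s) (r := b) (minpoly.aeval B s)
    rwa [← hy] at this
  have h1 : F ∣ g.scaleRoots b := minpoly.isIntegrallyClosed_dvd hy_int hscale_aeval
  have hscale_monic : (g.scaleRoots b).Monic :=
    (monic_scaleRoots_iff b).mpr (minpoly.monic hs_int)
  -- `g ∣ F.comp (C b * X)`
  have hcomp_aeval : aeval s (F.comp (C b * X)) = 0 := by
    rw [aeval_comp]
    have : aeval s (C b * X) = y := by
      rw [map_mul, aeval_C, aeval_X]
    rw [this, minpoly.aeval]
  have h2 : g ∣ F.comp (C b * X) := minpoly.isIntegrallyClosed_dvd hs_int hcomp_aeval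
  have hCbX : (C b * X : B[X]).natDegree = 1 := natDegree_C_mul_X b hb0
  have hcomp_deg : (F.comp (C b * X)).natDegree = n := by
    rw [natDegree_comp, hCbX, mul_one]
  have hcomp_ne : F.comp (C b * X) ≠ 0 := by
    intro h
    have hlead : (F.comp (C b * X)).leadingCoeff = F.leadingCoeff * (C b * X).leadingCoeff ^ n :=
      leadingCoeff_comp (by rw [hCbX]; exact one_ne_zero)
    rw [h, leadingCoeff_zero, (minpoly.monic hy_int).leadingCoeff, one_mul,
      leadingCoeff_mul, leadingCoeff_C, leadingCoeff_X, mul_one] at hlead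
    exact pow_ne_zero n hb0 hlead.symm
  have hmn : m ≤ n := by
    have := natDegree_le_of_dvd h2 hcomp_ne
    rwa [hcomp_deg] at this
  have hnm : n ≤ m := by
    have := natDegree_le_of_dvd h1 (scaleRoots_ne_zero (minpoly.ne_zero hs_int) b)
    rwa [natDegree_scaleRoots] at this
  have hnm' : n = m := le_antisymm hnm hmn
  -- `F = g.scaleRoots b`
  have hFeq : g.scaleRoots b = F := by
    obtain ⟨c, hc⟩ := h1
    have hcne : c ≠ 0 := by
      rintro rfl
      rw [mul_zero] at hc
      exact scaleRoots_ne_zero (minpoly.ne_zero hs_int) b hc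
    have hdm : (g.scaleRoots b).natDegree = F.natDegree + c.natDegree := by
      rw [hc, natDegree_mul (minpoly.ne_zero hy_int) hcne]
    have hsd : (g.scaleRoots b).natDegree = m := natDegree_scaleRoots g b
    have hFd : F.natDegree = n := rfl
    have hdegc : c.natDegree = 0 := by omega
    have hlc : c.leadingCoeff = 1 := by
      have := congrArg leadingCoeff hc
      rw [hscale_monic.leadingCoeff, leadingCoeff_mul,
        (minpoly.monic hy_int).leadingCoeff, one_mul] at this
      exact this.symm
    have h00 : c.coeff 0 = 1 := by
      rw [show (0 : ℕ) = c.natDegree from hdegc.symm]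
      exact hlc
    have hc1 : c = 1 := by
      rw [eq_C_of_natDegree_eq_zero hdegc, h00, map_one]
    rw [hc, hc1, mul_one]
  -- non-leading coefficients of `g` lie in `p`
  have hgc : ∀ k < m, g.coeff k ∈ p := by
    intro k hk
    have hFk : F.coeff k = g.coeff k * b ^ (m - k) := by
      rw [← hFeq]
      exact coeff_scaleRoots g b k
    have hmemk : g.coeff k * b ^ (m - k) ∈ p := by
      rw [← hFk]
      exact hFc k (by omega)
    rcases hp.mem_or_mem hmemk with h | h
    · exact h
    · exact absurd (hp.mem_of_pow_mem _ h) hb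
  -- conclude `s ^ m ∈ p·A`
  refine ⟨m, hmpos, ?_⟩
  have h0 := minpoly.aeval B s
  rw [aeval_eq_sum_range, Finset.sum_range_succ, (minpoly.monic hs_int).coeff_natDegree,
    one_smul] at h0
  have hsm : s ^ m = -∑ i ∈ Finset.range m, g.coeff i • s ^ i :=
    eq_neg_of_add_eq_zero_right h0
  rw [hsm]
  refine neg_mem (Submodule.sum_mem _ fun i hi => ?_)
  rw [Algebra.smul_def]
  exact Ideal.mul_mem_right _ _
    (Ideal.mem_map_of_mem _ (hgc i (Finset.mem_range.mp hi)))

/-- Going-down for an integral extension of an integrally closed domain: any prime `p`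
below the contraction of a prime `Q'` is itself the contraction of a prime contained
in `Q'` and containing `p·A`. -/
lemma going_down_aux (hinj : Function.Injective (algebraMap B A))
    (p : Ideal B) (hp : p.IsPrime) (Q' : Ideal A) (hQ' : Q'.IsPrime)
    (hle : p ≤ Q'.comap (algebraMap B A)) :
    ∃ Q : Ideal A, Q.IsPrime ∧ Q ≤ Q' ∧ p.map (algebraMap B A) ≤ Q ∧
      Q.comap (algebraMap B A) = p := by
  haveI := hp; haveI := hQ'
  set T : Submonoid A :=
    Q'.primeCompl ⊔ p.primeCompl.map (algebraMap B A : B →* A) with hT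
  have hdisj : Disjoint (↑(p.map (algebraMap B A)) : Set A) (T : Set A) := by
    rw [Set.disjoint_left]
    rintro x hx hxT
    obtain ⟨s, hs, z, hz, rfl⟩ := Submonoid.mem_sup.mp hxT
    obtain ⟨b, hbp, rfl⟩ := hz
    have hmem : algebraMap B A b * s ∈ p.map (algebraMap B A) := by
      rwa [mul_comm] at hx
    obtain ⟨m, hm, hsm⟩ := pow_mem_map_of_mul_mem hinj p hbp hmem
    have : s ^ m ∈ Q' := Ideal.map_le_iff_le_comap.mpr hle hsm
    exact hs (hQ'.mem_of_pow_mem _ this)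
  obtain ⟨Q, hQprime, hleQ, hdisjQ⟩ :=
    Ideal.exists_le_prime_disjoint (p.map (algebraMap B A)) T hdisj
  refine ⟨Q, hQprime, ?_, hleQ, ?_⟩
  · intro x hxQ
    by_contra hx
    exact Set.disjoint_left.mp hdisjQ hxQ (Submonoid.mem_sup_left hx)
  · apply le_antisymm
    · intro b hb
      by_contra hbp
      exact Set.disjoint_left.mp hdisjQ hb
        (Submonoid.mem_sup_right ⟨b, hbp, rfl⟩)
    · intro b hb
      exact hleQ (Ideal.mem_map_of_mem _ hb)

end Core

section Dim

/-- Lifting a chain of primes through an injective integral ring map. -/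
lemma exists_ltSeries_lift {R S : Type*} [CommRing R] [CommRing S] [Algebra R S]
    [Algebra.IsIntegral R S] (hinj : Function.Injective (algebraMap R S))
    (c : LTSeries (PrimeSpectrum R)) :
    ∃ c' : LTSeries (PrimeSpectrum S), c'.length = c.length ∧
      PrimeSpectrum.comap (algebraMap R S) c'.last = c.last := by
  suffices H : ∀ (n : ℕ) (c : LTSeries (PrimeSpectrum R)), c.length = n →
      ∃ c' : LTSeries (PrimeSpectrum S), c'.length = c.length ∧
        PrimeSpectrum.comap (algebraMap R S) c'.last = c.last from H c.length c rfl
  intro n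
  induction n with
  | zero =>
    intro c hn
    have hker : (⊥ : Ideal S).comap (algebraMap R S) ≤ c.last.asIdeal := by
      intro x hx
      have hx0 : algebraMap R S x = 0 := hx
      have : x = 0 := by
        apply hinj
        rw [hx0, map_zero]
      rw [this]
      exact (c.last.asIdeal).zero_mem
    obtain ⟨Q, hQge, hQprime, hQcomap⟩ :=
      Ideal.exists_ideal_over_prime_of_isIntegral c.last.asIdeal ⊥ hker
    refine ⟨RelSeries.singleton _ ⟨Q, hQprime⟩, by simp [hn], ?_⟩
    rw [RelSeries.last_singleton]
    exact PrimeSpectrum.ext hQcomap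
  | succ n ih =>
    intro c hn
    have hne : c.length ≠ 0 := by omega
    obtain ⟨c', hlen, hlast⟩ := ih c.eraseLast (by simp [hn])
    have hrel : c.eraseLast.last < c.last := c.eraseLast_last_rel_last hne
    have hlast' : c'.last.asIdeal.comap (algebraMap R S) = c.eraseLast.last.asIdeal :=
      congrArg PrimeSpectrum.asIdeal hlast
    have hcomap_le : c'.last.asIdeal.comap (algebraMap R S) ≤ c.last.asIdeal := by
      rw [hlast']
      exact le_of_lt hrel
    obtain ⟨Q, hQge, hQprime, hQcomap⟩ :=
      Ideal.exists_ideal_over_prime_of_isIntegral c.last.asIdeal c'.last.asIdeal hcomap_le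
    have hQlt : c'.last < (⟨Q, hQprime⟩ : PrimeSpectrum S) := by
      rw [← PrimeSpectrum.asIdeal_lt_asIdeal]
      refine lt_of_le_of_ne hQge ?_
      intro h
      have : c.eraseLast.last.asIdeal = c.last.asIdeal := by
        rw [← hlast', h, hQcomap]
      exact absurd (PrimeSpectrum.ext this) (ne_of_lt hrel)
    refine ⟨c'.snoc ⟨Q, hQprime⟩ hQlt, ?_, ?_⟩
    · simp [hlen, hn]
    · rw [RelSeries.last_snoc]
      exact PrimeSpectrum.ext hQcomap

/-- The Krull dimension is preserved by injective integral ring maps. -/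
theorem ringKrullDim_eq_of_isIntegral' {R S : Type*} [CommRing R] [CommRing S] [Algebra R S]
    [Algebra.IsIntegral R S] (hinj : Function.Injective (algebraMap R S)) :
    ringKrullDim S = ringKrullDim R := by
  apply le_antisymm
  · apply Order.krullDim_le_of_strictMono (PrimeSpectrum.comap (algebraMap R S))
    intro P P' hlt
    rw [← PrimeSpectrum.asIdeal_lt_asIdeal] at hlt ⊢
    obtain ⟨hle, x, hxP', hxP⟩ := SetLike.lt_iff_le_and_exists.mp hlt
    exact Ideal.comap_lt_comap_of_integral_mem_sdiff hle ⟨hxP', hxP⟩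
      (Algebra.IsIntegral.isIntegral x)
  · rw [ringKrullDim, ringKrullDim, Order.krullDim, Order.krullDim]
    apply iSup_le
    intro c
    obtain ⟨c', hlen, -⟩ := exists_ltSeries_lift hinj c
    rw [← hlen]
    exact le_iSup (fun p : LTSeries (PrimeSpectrum S) => (p.length : WithBot ℕ∞)) c'

end Dim

/-- Proposition 2 of the paper: let `φ : X → Y` be a finite dominant morphism of affine
varieties over an algebraically closed field `k`, with `Y` normal.  In terms of
coordinate rings: `B = k[Y] ⊆ A = k[X]` is an injective integral extension of domains of
finite type over `k` with `B` integrally closed.  If `W = V(𝔮)` is an irreducible closed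
subvariety of `Y` and `Z = V(𝔮̃)` an irreducible component of `φ⁻¹(W)` (so `𝔮̃` is a
minimal prime over `𝔮A`), then `φ(Z) = W` and `dim Z = dim W`. -/
theorem finite_dominant_normal_image_of_component
    (k A B : Type*) [Field k] [IsAlgClosed k]
    [CommRing A] [CommRing B] [IsDomain A] [IsDomain B]
    [Algebra k A] [Algebra k B] [Algebra.FiniteType k A] [Algebra.FiniteType k B]
    [Algebra B A] [IsScalarTower k B A] [Algebra.IsIntegral B A]
    [IsIntegrallyClosed B]
    (hinj : Function.Injective (algebraMap B A))
    (q : Ideal B) (hq : q.IsPrime)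
    (q' : Ideal A) (hq' : q' ∈ (q.map (algebraMap B A)).minimalPrimes) :
    PrimeSpectrum.comap (algebraMap B A) ''
        PrimeSpectrum.zeroLocus (q' : Set A) =
      PrimeSpectrum.zeroLocus (q : Set B) ∧
      ringKrullDim (A ⧸ q') = ringKrullDim (B ⧸ q) := by
  obtain ⟨⟨hq'prime, hq'ge⟩, hq'min⟩ := hq'
  haveI := hq'prime
  haveI := hq
  -- the contraction of q' is exactly q (uses going-down)
  have hcomap : q'.comap (algebraMap B A) = q := by
    obtain ⟨Q, hQprime, hQle, hQge, hQcomap⟩ :=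
      going_down_aux hinj q hq q' hq'prime (Ideal.map_le_iff_le_comap.mp hq'ge)
    have : q' ≤ Q := hq'min ⟨hQprime, hQge⟩ hQle
    have hQeq : Q = q' := le_antisymm hQle this
    rw [← hQeq, hQcomap]
  constructor
  · -- image of V(q') is V(q)
    ext P
    constructor
    · rintro ⟨P', hP', rfl⟩
      rw [PrimeSpectrum.mem_zeroLocus] at hP' ⊢
      intro x hx
      have : x ∈ q'.comap (algebraMap B A) := by
        rw [hcomap]; exact hx
      exact hP' this
    · intro hP
      rw [PrimeSpectrum.mem_zeroLocus] at hP
      have hle : q'.comap (algebraMap B A) ≤ P.asIdeal := by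
        rw [hcomap]; exact hP
      obtain ⟨Q, hQge, hQprime, hQcomap⟩ :=
        Ideal.exists_ideal_over_prime_of_isIntegral P.asIdeal q' hle
      exact ⟨⟨Q, hQprime⟩, (PrimeSpectrum.mem_zeroLocus _ _).mpr hQge,
        PrimeSpectrum.ext hQcomap⟩
  · -- dimension equality
    subst hcomap
    letI : Algebra (B ⧸ q'.comap (algebraMap B A)) (A ⧸ q') :=
      (Ideal.quotientMap q' (algebraMap B A) le_rfl).toAlgebra
    haveI : Algebra.IsIntegral (B ⧸ q'.comap (algebraMap B A)) (A ⧸ q') := by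
      constructor
      exact RingHom.IsIntegral.quotient (algebraMap B A)
        (fun x => Algebra.IsIntegral.isIntegral x)
    exact ringKrullDim_eq_of_isIntegral'
      (R := B ⧸ q'.comap (algebraMap B A)) (S := A ⧸ q')
      Ideal.quotientMap_injective
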